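/- Let G be a standard Gaussian random variable, X = exp(μ + λG), and let X^d be the L² projection of X onto the span of {H_0(G), ..., H_d(G)}. Then ‖X − X^d‖₂² ≤ exp(2μ + 2λ²) · λ^{2(d+1)}/(d+1)!. -/

import Mathlib

open Polynomial Finset ProbabilityTheory MeasureTheory Real Filter Set
open scoped NNReal ENNReal

noncomputable section Analytic

lemma exp_shift (l x : ℝ) :
    Real.exp (l * x - x ^ 2 / 2) = Real.exp (l ^ 2 / 2) * Real.exp (-(1/2) * (x - l) ^ 2) := by
  rw [← Real.exp_add]; ring_nf

lemma integrable_E (l : ℝ) : Integrable (fun x : ℝ => Real.exp (l * x - x ^ 2 / 2)) := by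
  simp_rw [exp_shift]
  exact ((integrable_exp_neg_mul_sq (by norm_num : (0:ℝ) < 1/2)).comp_sub_right l).const_mul _

lemma integral_E (l : ℝ) :
    ∫ x : ℝ, Real.exp (l * x - x ^ 2 / 2) = Real.sqrt (2 * π) * Real.exp (l ^ 2 / 2) := by
  simp_rw [exp_shift, MeasureTheory.integral_const_mul]
  rw [integral_sub_right_eq_self (fun y => Real.exp (-(1/2) * y ^ 2)) l]
  rw [integral_gaussian, show π / (1/2) = 2 * π by ring, mul_comm]

lemma abs_eval_le (p : Polynomial ℝ) : ∃ C : ℝ, 0 ≤ C ∧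
    ∀ x : ℝ, |p.eval x| ≤ C * Real.exp |x| := by
  refine ⟨∑ i ∈ Finset.range (p.natDegree + 1), |p.coeff i| * i.factorial, by positivity, fun x => ?_⟩
  rw [Polynomial.eval_eq_sum_range]
  calc |∑ i ∈ Finset.range (p.natDegree + 1), p.coeff i * x ^ i|
      ≤ ∑ i ∈ Finset.range (p.natDegree + 1), |p.coeff i * x ^ i| :=
        Finset.abs_sum_le_sum_abs _ _
    _ ≤ ∑ i ∈ Finset.range (p.natDegree + 1), |p.coeff i| * i.factorial * Real.exp |x| := by
        refine Finset.sum_le_sum fun i _ => ?_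
        rw [abs_mul, abs_pow]
        have h2 : |x| ^ i / i.factorial ≤ Real.exp |x| := by
          calc |x| ^ i / i.factorial
              ≤ ∑ j ∈ Finset.range (i + 1), |x| ^ j / j.factorial :=
                Finset.single_le_sum (f := fun j => |x| ^ j / j.factorial)
                  (fun j _ => by positivity) (Finset.self_mem_range_succ i)
            _ ≤ Real.exp |x| := Real.sum_le_exp_of_nonneg (abs_nonneg x) _
        have h1 : |x| ^ i ≤ i.factorial * Real.exp |x| := by
          rw [div_le_iff₀ (by positivity)] at h2
          linarith [h2]
        calc |p.coeff i| * |x| ^ i ≤ |p.coeff i| * (i.factorial * Real.exp |x|) :=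
              mul_le_mul_of_nonneg_left h1 (abs_nonneg _)
          _ = |p.coeff i| * i.factorial * Real.exp |x| := by ring
    _ = (∑ i ∈ Finset.range (p.natDegree + 1), |p.coeff i| * i.factorial) * Real.exp |x| :=
        (Finset.sum_mul _ _ _).symm

lemma abs_poly_E_le (p : Polynomial ℝ) (l : ℝ) : ∃ C : ℝ, 0 ≤ C ∧ ∀ x : ℝ,
    |p.eval x * Real.exp (l * x - x ^ 2 / 2)| ≤
      C * (Real.exp ((l + 1) * x - x ^ 2 / 2) + Real.exp ((l - 1) * x - x ^ 2 / 2)) := by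
  obtain ⟨C, hC0, hC⟩ := abs_eval_le p
  refine ⟨C, hC0, fun x => ?_⟩
  rw [abs_mul, Real.abs_exp]
  have h1 : Real.exp |x| ≤ Real.exp x + Real.exp (-x) := by
    rcases abs_cases x with ⟨h, _⟩ | ⟨h, _⟩ <;> rw [h] <;>
      nlinarith [Real.exp_pos x, Real.exp_pos (-x)]
  calc |p.eval x| * Real.exp (l * x - x ^ 2 / 2)
      ≤ C * Real.exp |x| * Real.exp (l * x - x ^ 2 / 2) :=
        mul_le_mul_of_nonneg_right (hC x) (Real.exp_pos _).le
    _ ≤ C * ((Real.exp x + Real.exp (-x)) * Real.exp (l * x - x ^ 2 / 2)) := by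
        rw [mul_assoc]
        exact mul_le_mul_of_nonneg_left
          (mul_le_mul_of_nonneg_right h1 (Real.exp_pos _).le) hC0
    _ = C * (Real.exp ((l + 1) * x - x ^ 2 / 2) + Real.exp ((l - 1) * x - x ^ 2 / 2)) := by
        rw [add_mul, ← Real.exp_add, ← Real.exp_add]
        ring_nf

lemma integrable_poly_E (p : Polynomial ℝ) (l : ℝ) :
    Integrable (fun x : ℝ => p.eval x * Real.exp (l * x - x ^ 2 / 2)) := by
  obtain ⟨C, hC0, hC⟩ := abs_poly_E_le p l
  refine Integrable.mono' (((integrable_E (l + 1)).add (integrable_E (l - 1))).const_mul C)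
    ?_ (ae_of_all _ fun x => by simpa [Real.norm_eq_abs, abs_mul, Real.abs_exp] using hC x)
  exact (p.continuous.mul (Real.continuous_exp.comp (by fun_prop))).aestronglyMeasurable

lemma integral_deriv_poly_E (p : Polynomial ℝ) (l : ℝ) :
    ∫ x : ℝ, ((derivative p).eval x + (l - x) * p.eval x) * Real.exp (l * x - x ^ 2 / 2) = 0 := by
  have hderiv : ∀ x : ℝ, HasDerivAt (fun x => p.eval x * Real.exp (l * x - x ^ 2 / 2))
      (((derivative p).eval x + (l - x) * p.eval x) * Real.exp (l * x - x ^ 2 / 2)) x := by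
    intro x
    have h1 : HasDerivAt (fun x : ℝ => l * x - x ^ 2 / 2) (l - x) x := by
      have := ((hasDerivAt_id x).const_mul l).sub ((hasDerivAt_pow 2 x).div_const 2)
      exact this.congr_deriv (by simp)
    have h2 := (p.hasDerivAt x).mul h1.exp
    refine h2.congr_deriv ?_
    ring
  have hint' : Integrable (fun x : ℝ =>
      ((derivative p).eval x + (l - x) * p.eval x) * Real.exp (l * x - x ^ 2 / 2)) := by
    have := integrable_poly_E (derivative p + (C l - X) * p) l
    refine this.congr (ae_of_all _ fun x => ?_)
    simp only [eval_add, eval_mul, eval_sub, eval_C, eval_X]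
  exact integral_eq_zero_of_hasDerivAt_of_integrable hderiv hint' (integrable_poly_E p l)

end Analytic

noncomputable section JAux

def hR (n : ℕ) : Polynomial ℝ := (Polynomial.hermite n).map (Int.castRingHom ℝ)

def J (p : Polynomial ℝ) (l : ℝ) : ℝ := ∫ x : ℝ, p.eval x * Real.exp (l * x - x ^ 2 / 2)

variable (integrable_poly_E : ∀ (p : Polynomial ℝ) (l : ℝ),
    Integrable (fun x : ℝ => p.eval x * Real.exp (l * x - x ^ 2 / 2)))
variable (integral_deriv_poly_E : ∀ (p : Polynomial ℝ) (l : ℝ),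
    ∫ x : ℝ, ((derivative p).eval x + (l - x) * p.eval x) * Real.exp (l * x - x ^ 2 / 2) = 0)
variable (integral_E : ∀ l : ℝ,
    ∫ x : ℝ, Real.exp (l * x - x ^ 2 / 2) = Real.sqrt (2 * π) * Real.exp (l ^ 2 / 2))

lemma J_add (p q : Polynomial ℝ) (l : ℝ) : J (p + q) l = J p l + J q l := by
  unfold J
  rw [← integral_add (integrable_poly_E p l) (integrable_poly_E q l)]
  congr 1; funext x; simp [add_mul]

lemma J_sub (p q : Polynomial ℝ) (l : ℝ) : J (p - q) l = J p l - J q l := by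
  unfold J
  rw [← integral_sub (integrable_poly_E p l) (integrable_poly_E q l)]
  congr 1; funext x; simp [sub_mul]

lemma J_C_mul (a : ℝ) (p : Polynomial ℝ) (l : ℝ) : J (C a * p) l = a * J p l := by
  unfold J
  rw [← MeasureTheory.integral_const_mul]
  congr 1; funext x; simp; ring

lemma J_sum {ι : Type*} (s : Finset ι) (f : ι → Polynomial ℝ) (l : ℝ) :
    J (∑ i ∈ s, f i) l = ∑ i ∈ s, J (f i) l := by
  unfold J
  rw [← integral_finset_sum s (fun i _ => integrable_poly_E (f i) l)]
  congr 1; funext x; rw [Polynomial.eval_finset_sum, Finset.sum_mul]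

lemma J_X_mul (p : Polynomial ℝ) (l : ℝ) :
    J (X * p) l = J (derivative p) l + l * J p l := by
  have h0 : J (derivative p + C l * p - X * p) l = 0 := by
    unfold J
    rw [← integral_deriv_poly_E p l]
    congr 1; funext x; simp; ring
  rw [J_sub, J_add, J_C_mul] at h0
  linarith [h0]

end JAux

noncomputable section JAux2

variable (integrable_poly_E : ∀ (p : Polynomial ℝ) (l : ℝ),
    Integrable (fun x : ℝ => p.eval x * Real.exp (l * x - x ^ 2 / 2)))
variable (integral_deriv_poly_E : ∀ (p : Polynomial ℝ) (l : ℝ),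
    ∫ x : ℝ, ((derivative p).eval x + (l - x) * p.eval x) * Real.exp (l * x - x ^ 2 / 2) = 0)
variable (integral_E : ∀ l : ℝ,
    ∫ x : ℝ, Real.exp (l * x - x ^ 2 / 2) = Real.sqrt (2 * π) * Real.exp (l ^ 2 / 2))

lemma hR_zero : hR 0 = 1 := by simp [hR, hermite_zero]

lemma hR_succ (n : ℕ) : hR (n + 1) = X * hR n - derivative (hR n) := by
  simp [hR, hermite_succ, Polynomial.derivative_map]

lemma aeval_hermite_eq (x : ℝ) (n : ℕ) :
    (Polynomial.aeval x (Polynomial.hermite n) : ℝ) = (hR n).eval x := by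
  rw [hR, eval_map, aeval_def]
  norm_cast

lemma derivative_hR (n : ℕ) :
    derivative (hR (n + 1)) = C ((n : ℝ) + 1) * hR n := by
  induction n with
  | zero =>
    have h1 : hR 1 = X := by simp [hR, hermite_one]
    simp [h1, hR_zero]
  | succ n ih =>
    rw [hR_succ (n + 1)]
    rw [derivative_sub, derivative_mul, derivative_X, one_mul, ih]
    rw [derivative_mul, derivative_C, zero_mul, zero_add]
    rw [hR_succ n]
    push_cast
    simp only [C_add, C_1]
    ring

lemma J_zero_poly (l : ℝ) : J 0 l = 0 := by
  unfold J; simp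

lemma J_one (l : ℝ) : J 1 l = Real.sqrt (2 * π) * Real.exp (l ^ 2 / 2) := by
  unfold J; simp only [eval_one, one_mul]; exact integral_E l

lemma J_hR (n : ℕ) (l : ℝ) :
    J (hR n) l = l ^ n * (Real.sqrt (2 * π) * Real.exp (l ^ 2 / 2)) := by
  induction n with
  | zero => rw [hR_zero, pow_zero, one_mul]; exact J_one l
  | succ n ih =>
    rw [hR_succ, J_sub, J_X_mul, ih, pow_succ]
    ring

lemma J_orth : ∀ n m : ℕ, J (hR m * hR n) 0 =
    (if m = n then (n.factorial : ℝ) else 0) * Real.sqrt (2 * π) := by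
  intro n
  induction n with
  | zero =>
    intro m
    rw [hR_zero, mul_one, J_hR]
    rcases m with _ | m
    · simp [Real.exp_zero]
    · simp [Real.exp_zero, Nat.succ_ne_zero]
  | succ n ih =>
    intro m
    have key : J (hR m * hR (n + 1)) 0 = J (derivative (hR m) * hR n) 0 := by
      calc J (hR m * hR (n + 1)) 0
          = J (X * (hR m * hR n) - hR m * derivative (hR n)) 0 := by
            congr 1; rw [hR_succ]; ring
        _ = J (X * (hR m * hR n)) 0 - J (hR m * derivative (hR n)) 0 := J_sub _ _ _
        _ = (J (derivative (hR m * hR n)) 0 + 0 * J (hR m * hR n) 0) -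
              J (hR m * derivative (hR n)) 0 := by rw [J_X_mul]
        _ = J (derivative (hR m) * hR n) 0 := by
            rw [derivative_mul, J_add]
            ring
    rw [key]
    rcases m with _ | m
    · rw [show derivative (hR 0) = 0 by rw [hR_zero]; simp, zero_mul, J_zero_poly]
      simp
    · rw [derivative_hR, mul_assoc, J_C_mul, ih m]
      by_cases h : m = n
      · subst h
        simp only [if_pos rfl, Nat.factorial_succ]
        push_cast
        ring
      · have h2 : ¬(m + 1 = n + 1) := fun hh => h (Nat.succ_injective hh)
        simp [h, h2]

end JAux2

lemma exp_tail_bound (t : ℝ) (ht : 0 ≤ t) (d : ℕ) :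
    Real.exp t - ∑ n ∈ Finset.range (d + 1), t ^ n / n.factorial ≤
      t ^ (d + 1) / (d + 1).factorial * Real.exp t := by
  have hs : Summable (fun n : ℕ => t ^ n / n.factorial) := Real.summable_pow_div_factorial t
  have hexp : Real.exp t = ∑' n : ℕ, t ^ n / n.factorial := by
    rw [Real.exp_eq_exp_ℝ, NormedSpace.exp_eq_tsum_div]
  have hsplit := Summable.sum_add_tsum_nat_add (f := fun n : ℕ => t ^ n / (n.factorial : ℝ)) (d + 1) hs
  have hterm : ∀ i : ℕ, t ^ (i + (d + 1)) / ((i + (d + 1)).factorial : ℝ) ≤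
      t ^ (d + 1) / (d + 1).factorial * (t ^ i / i.factorial) := by
    intro i
    have hfac : ((i.factorial : ℝ) * (d + 1).factorial) ≤ ((i + (d + 1)).factorial : ℝ) := by
      exact_mod_cast Nat.le_of_dvd (Nat.factorial_pos _)
        (Nat.factorial_mul_factorial_dvd_factorial_add i (d + 1))
    calc t ^ (i + (d + 1)) / ((i + (d + 1)).factorial : ℝ)
        ≤ t ^ (i + (d + 1)) / ((i.factorial : ℝ) * (d + 1).factorial) := by
          gcongr
      _ = t ^ (d + 1) / (d + 1).factorial * (t ^ i / i.factorial) := by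
          rw [pow_add]; ring
  have hsum2 : Summable (fun i : ℕ => t ^ (d + 1) / (d + 1).factorial * (t ^ i / i.factorial)) :=
    hs.mul_left _
  have hsum1 : Summable (fun i : ℕ => t ^ (i + (d + 1)) / ((i + (d + 1)).factorial : ℝ)) := by
    exact_mod_cast (summable_nat_add_iff (d + 1)).mpr hs
  have h1 := Summable.tsum_le_tsum hterm hsum1 hsum2
  rw [tsum_mul_left, ← hexp] at h1
  rw [← hexp] at hsplit
  linarith


/-- Truncation error for the Hermite expansion of `X = exp (μ + λ G)`:
the squared `L²` distance between `X` and its projection `X^d` onto the span of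
`H_0(G), …, H_d(G)` (whose Hermite coefficients are `exp (μ + λ²/2) λⁿ/n!`) is at most
`exp (2μ + 2λ²) λ^{2(d+1)}/(d+1)!`. -/
theorem hermite_truncation_error_one_dim (μ l : ℝ) (d : ℕ) :
    ∫ x : ℝ, (Real.exp (μ + l * x) -
        ∑ n ∈ Finset.range (d + 1),
          Real.exp (μ + l ^ 2 / 2) * l ^ n / (n.factorial : ℝ) *
            (Polynomial.aeval x (Polynomial.hermite n) : ℝ)) ^ 2
      ∂(gaussianReal 0 1) ≤
      Real.exp (2 * μ + 2 * l ^ 2) * l ^ (2 * (d + 1)) / ((d + 1).factorial : ℝ) := by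
  classical
  set c : ℕ → ℝ := fun n => Real.exp (μ + l ^ 2 / 2) * l ^ n / (n.factorial : ℝ) with hc
  set P : Polynomial ℝ := ∑ n ∈ Finset.range (d + 1), C (c n) * hR n with hP
  have hPeval : ∀ x : ℝ, P.eval x = ∑ n ∈ Finset.range (d + 1),
      Real.exp (μ + l ^ 2 / 2) * l ^ n / (n.factorial : ℝ)
        * (Polynomial.aeval x (Polynomial.hermite n) : ℝ) := by
    intro x
    rw [hP, Polynomial.eval_finset_sum]
    exact Finset.sum_congr rfl fun n _ => by rw [eval_mul, eval_C, aeval_hermite_eq, hc]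
  -- measure conversion
  have hgauss : ∀ g : ℝ → ℝ, ∫ x, g x ∂(gaussianReal 0 1)
      = ∫ x, gaussianPDFReal 0 1 x * g x := by
    intro g
    rw [gaussianReal_of_var_ne_zero _ one_ne_zero]
    have hfun : (gaussianPDF 0 1) = fun x => ((gaussianPDFReal 0 1 x).toNNReal : ℝ≥0∞) := rfl
    have hmeas : Measurable (fun x => (gaussianPDFReal 0 1 x).toNNReal) :=
      measurable_real_toNNReal.comp (measurable_gaussianPDFReal 0 1)
    have h2 : ∫ x, g x ∂(volume.withDensity
        (fun x => ((gaussianPDFReal 0 1 x).toNNReal : ℝ≥0∞)))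
        = ∫ x, (gaussianPDFReal 0 1 x).toNNReal • g x :=
      integral_withDensity_eq_integral_smul hmeas g
    rw [hfun, h2]
    congr 1
    funext x
    rw [NNReal.smul_def, Real.coe_toNNReal _ (gaussianPDFReal_nonneg 0 1 x), smul_eq_mul]
  have hpdf : ∀ x : ℝ, gaussianPDFReal 0 1 x
      = (Real.sqrt (2 * π))⁻¹ * Real.exp (0 * x - x ^ 2 / 2) := by
    intro x
    rw [gaussianPDFReal]
    push_cast
    congr 1
    · norm_num
    · congr 1
      ring
  rw [hgauss]
  have hrw : (fun x : ℝ => gaussianPDFReal 0 1 x * (Real.exp (μ + l * x) -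
        ∑ n ∈ Finset.range (d + 1),
          Real.exp (μ + l ^ 2 / 2) * l ^ n / (n.factorial : ℝ) *
            (Polynomial.aeval x (Polynomial.hermite n) : ℝ)) ^ 2)
      = fun x : ℝ => (Real.sqrt (2 * π))⁻¹ *
          (Real.exp (2 * μ) * Real.exp ((2 * l) * x - x ^ 2 / 2)
            - 2 * Real.exp μ * (P.eval x * Real.exp (l * x - x ^ 2 / 2))
            + (P * P).eval x * Real.exp (0 * x - x ^ 2 / 2)) := by
    funext x
    rw [hpdf x, ← hPeval x, eval_mul]
    have h1 : Real.exp (μ + l * x) ^ 2 * Real.exp (0 * x - x ^ 2 / 2)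
        = Real.exp (2 * μ) * Real.exp ((2 * l) * x - x ^ 2 / 2) := by
      rw [sq, ← Real.exp_add, ← Real.exp_add, ← Real.exp_add]
      congr 1; ring
    have h2 : Real.exp (μ + l * x) * Real.exp (0 * x - x ^ 2 / 2)
        = Real.exp μ * Real.exp (l * x - x ^ 2 / 2) := by
      rw [← Real.exp_add, ← Real.exp_add]
      congr 1; ring
    linear_combination (Real.sqrt (2 * π))⁻¹ * h1
      - 2 * (Real.sqrt (2 * π))⁻¹ * P.eval x * h2
  rw [hrw, MeasureTheory.integral_const_mul]
  have hI : ∫ x : ℝ, (Real.exp (2 * μ) * Real.exp ((2 * l) * x - x ^ 2 / 2)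
        - 2 * Real.exp μ * (P.eval x * Real.exp (l * x - x ^ 2 / 2))
        + (P * P).eval x * Real.exp (0 * x - x ^ 2 / 2))
      = Real.exp (2 * μ) * (Real.sqrt (2 * π) * Real.exp ((2 * l) ^ 2 / 2))
        - 2 * Real.exp μ * J P l + J (P * P) 0 := by
    have hA1 : Integrable (fun x : ℝ => Real.exp (2 * μ) * Real.exp ((2 * l) * x - x ^ 2 / 2)) :=
      (integrable_E (2 * l)).const_mul _
    have hA2 : Integrable (fun x : ℝ =>
        2 * Real.exp μ * (P.eval x * Real.exp (l * x - x ^ 2 / 2))) :=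
      (integrable_poly_E P l).const_mul _
    have hB := integrable_poly_E (P * P) 0
    have h3 : ∫ x : ℝ, (Real.exp (2 * μ) * Real.exp ((2 * l) * x - x ^ 2 / 2)
          - 2 * Real.exp μ * (P.eval x * Real.exp (l * x - x ^ 2 / 2))
          + (P * P).eval x * Real.exp (0 * x - x ^ 2 / 2))
        = (∫ x : ℝ, (Real.exp (2 * μ) * Real.exp ((2 * l) * x - x ^ 2 / 2)
          - 2 * Real.exp μ * (P.eval x * Real.exp (l * x - x ^ 2 / 2))))
          + ∫ x : ℝ, (P * P).eval x * Real.exp (0 * x - x ^ 2 / 2) :=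
      integral_add (hA1.sub hA2) hB
    have h4 : (∫ x : ℝ, (Real.exp (2 * μ) * Real.exp ((2 * l) * x - x ^ 2 / 2)
          - 2 * Real.exp μ * (P.eval x * Real.exp (l * x - x ^ 2 / 2))))
        = (∫ x : ℝ, Real.exp (2 * μ) * Real.exp ((2 * l) * x - x ^ 2 / 2))
          - ∫ x : ℝ, 2 * Real.exp μ * (P.eval x * Real.exp (l * x - x ^ 2 / 2)) :=
      integral_sub hA1 hA2
    rw [h3, h4, MeasureTheory.integral_const_mul, MeasureTheory.integral_const_mul, integral_E]
    rfl
  rw [hI]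
  have hJP : J P l = ∑ n ∈ Finset.range (d + 1),
      c n * (l ^ n * (Real.sqrt (2 * π) * Real.exp (l ^ 2 / 2))) := by
    rw [hP, J_sum]
    exact Finset.sum_congr rfl fun n _ => by rw [J_C_mul, J_hR]
  have hJPP : J (P * P) 0 = ∑ n ∈ Finset.range (d + 1),
      c n * c n * ((n.factorial : ℝ) * Real.sqrt (2 * π)) := by
    rw [hP, Finset.sum_mul_sum, J_sum]
    refine Finset.sum_congr rfl fun n hn => ?_
    rw [J_sum]
    have hterm : ∀ m, J ((C (c n) * hR n) * (C (c m) * hR m)) 0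
        = c n * (c m * ((if n = m then (m.factorial : ℝ) else 0) * Real.sqrt (2 * π))) := by
      intro m
      have hpoly : (C (c n) * hR n) * (C (c m) * hR m)
          = C (c n) * (C (c m) * (hR n * hR m)) := by ring
      rw [hpoly, J_C_mul, J_C_mul, J_orth]
    calc ∑ m ∈ Finset.range (d + 1), J ((C (c n) * hR n) * (C (c m) * hR m)) 0
        = ∑ m ∈ Finset.range (d + 1),
            c n * (c m * ((if n = m then (m.factorial : ℝ) else 0) * Real.sqrt (2 * π))) :=
          Finset.sum_congr rfl fun m _ => hterm m
      _ = c n * c n * ((n.factorial : ℝ) * Real.sqrt (2 * π)) := by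
          rw [Finset.sum_eq_single n]
          · rw [if_pos rfl]; ring
          · intro m _ hm
            rw [if_neg fun h => hm h.symm]
            ring
          · intro hn'
            exact absurd hn hn'
  set T : ℝ := ∑ n ∈ Finset.range (d + 1), l ^ (2 * n) / (n.factorial : ℝ) with hT
  have hfac_ne : ∀ n : ℕ, ((n.factorial : ℝ)) ≠ 0 :=
    fun n => Nat.cast_ne_zero.mpr (Nat.factorial_ne_zero n)
  have hJP' : Real.exp μ * J P l = Real.sqrt (2 * π) * (Real.exp (2 * μ + l ^ 2) * T) := by
    rw [hJP, hT]
    simp only [Finset.mul_sum]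
    refine Finset.sum_congr rfl fun n _ => ?_
    have hmerge : Real.exp (2 * μ + l ^ 2)
        = Real.exp μ * Real.exp (μ + l ^ 2 / 2) * Real.exp (l ^ 2 / 2) := by
      rw [← Real.exp_add, ← Real.exp_add]; congr 1; ring
    simp only [hc]
    rw [hmerge, show 2 * n = n + n from two_mul n, pow_add]
    ring
  have hJPP' : J (P * P) 0 = Real.sqrt (2 * π) * (Real.exp (2 * μ + l ^ 2) * T) := by
    rw [hJPP, hT]
    simp only [Finset.mul_sum]
    refine Finset.sum_congr rfl fun n _ => ?_
    have hmerge : Real.exp (2 * μ + l ^ 2)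
        = Real.exp (μ + l ^ 2 / 2) * Real.exp (μ + l ^ 2 / 2) := by
      rw [← Real.exp_add]; congr 1; ring
    simp only [hc]
    rw [hmerge, show 2 * n = n + n from two_mul n, pow_add]
    field_simp
  have hmerge3 : Real.exp (2 * μ) * Real.exp ((2 * l) ^ 2 / 2)
      = Real.exp (2 * μ + 2 * l ^ 2) := by
    rw [← Real.exp_add]; congr 1; ring
  have hsqrt : (Real.sqrt (2 * π))⁻¹ * Real.sqrt (2 * π) = 1 :=
    inv_mul_cancel₀ (ne_of_gt (Real.sqrt_pos.mpr (by positivity)))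
  have hLHS : (Real.sqrt (2 * π))⁻¹ *
      (Real.exp (2 * μ) * (Real.sqrt (2 * π) * Real.exp ((2 * l) ^ 2 / 2))
        - 2 * Real.exp μ * J P l + J (P * P) 0)
      = Real.exp (2 * μ + 2 * l ^ 2) - Real.exp (2 * μ + l ^ 2) * T := by
    rw [mul_assoc 2 (Real.exp μ) (J P l), hJP', hJPP',
      show Real.exp (2 * μ) * (Real.sqrt (2 * π) * Real.exp ((2 * l) ^ 2 / 2))
        = Real.sqrt (2 * π) * Real.exp (2 * μ + 2 * l ^ 2) by
          rw [mul_left_comm, hmerge3]]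
    linear_combination (Real.exp (2 * μ + 2 * l ^ 2) - Real.exp (2 * μ + l ^ 2) * T) * hsqrt
  rw [hLHS]
  -- final bound
  have ht : (0 : ℝ) ≤ l ^ 2 := sq_nonneg l
  have tail := exp_tail_bound (l ^ 2) ht d
  have hTT : T = ∑ n ∈ Finset.range (d + 1), (l ^ 2) ^ n / (n.factorial : ℝ) :=
    Finset.sum_congr rfl fun n _ => by rw [← pow_mul]
  have hkey : Real.exp (2 * μ + l ^ 2) * Real.exp (l ^ 2) = Real.exp (2 * μ + 2 * l ^ 2) := by
    rw [← Real.exp_add]; congr 1; ring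
  have hE21 : (0 : ℝ) < Real.exp (2 * μ + l ^ 2) := Real.exp_pos _
  calc Real.exp (2 * μ + 2 * l ^ 2) - Real.exp (2 * μ + l ^ 2) * T
      = Real.exp (2 * μ + l ^ 2) *
          (Real.exp (l ^ 2) - ∑ n ∈ Finset.range (d + 1), (l ^ 2) ^ n / (n.factorial : ℝ)) := by
        rw [← hTT]
        linear_combination -hkey
    _ ≤ Real.exp (2 * μ + l ^ 2) *
          ((l ^ 2) ^ (d + 1) / ((d + 1).factorial : ℝ) * Real.exp (l ^ 2)) :=
        mul_le_mul_of_nonneg_left tail hE21.le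
    _ = Real.exp (2 * μ + 2 * l ^ 2) * l ^ (2 * (d + 1)) / ((d + 1).factorial : ℝ) := by
        rw [pow_mul]
        linear_combination ((l ^ 2) ^ (d + 1) / ((d + 1).factorial : ℝ)) * hkey
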